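/- arXiv:1202.2441 — 3 statements merged into one kernel-verified Lean document; each statement's English description precedes it below -/
import Mathlib

section
/- Let i : R → S be a ring homomorphism such that S is finitely generated projective as a right R-module and Hom_R(S,R) ≅ S as (R,S)-bimodules. Then there exists a Frobenius system (e, ε), i.e., an element e = e¹ ⊗ e² ∈ (S ⊗_R S)^S (meaning s·e¹ ⊗ e² = e¹ ⊗ e²·s for all s ∈ S) and an R-bimodule map ε : S → R satisfying ε(e¹)e² = e¹ε(e²) = 1. -/
/-!
STATEMENT 0. `S/R` ring extension (formalized with `R` commutative acting centrally,
i.e. `Algebra R S`, since tensor products in Mathlib are over commutative rings).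
If `S` is finitely generated projective as a right `R`-module and
`Hom_R(S,R) ≅ S` as `(R,S)`-bimodules, then a Frobenius system `(e, ε)` exists.
-/

open TensorProduct

section FrobDefs

variable {R S : Type*} [CommRing R] [Ring S] [Algebra R S]

/-- `x ⊗ y ↦ ε(x) • y`, i.e. `i(ε x) * y`. -/
noncomputable def ctrL (ε : S →ₗ[R] R) : S ⊗[R] S →ₗ[R] S :=
  (TensorProduct.lid R S).toLinearMap ∘ₗ LinearMap.rTensor S ε

/-- `x ⊗ y ↦ ε(y) • x`, i.e. `x * i(ε y)`. -/
noncomputable def ctrR (ε : S →ₗ[R] R) : S ⊗[R] S →ₗ[R] S :=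
  (TensorProduct.rid R S).toLinearMap ∘ₗ LinearMap.lTensor S ε

/-- `(e, ε)` is a Frobenius system for `S/R` : `e ∈ (S ⊗_R S)^S`
(`s·e¹ ⊗ e² = e¹ ⊗ e²·s` for all `s`), `ε : S → R` an `R`-bimodule map,
and `ε(e¹)e² = e¹ε(e²) = 1`. -/
noncomputable def IsFrobeniusSystem (e : S ⊗[R] S) (ε : S →ₗ[R] R) : Prop :=
  (∀ s : S, LinearMap.rTensor S (LinearMap.mulLeft R s) e
      = LinearMap.lTensor S (LinearMap.mulRight R s) e) ∧
  ctrL ε e = 1 ∧ ctrR ε e = 1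

end FrobDefs

/-- If `S` is finitely generated projective as a (right) `R`-module and
`Hom_R(S, R) ≅ S` as `(R,S)`-bimodules (the right `S`-action on `Hom_R(S,R)` being
`(f·s)(x) = f(s·x)`), then `S/R` admits a Frobenius system. -/
theorem frobenius_system_of_hom_iso
    {R S : Type*} [CommRing R] [Ring S] [Algebra R S]
    [Module.Finite R S] [Module.Projective R S]
    (φ : (S →ₗ[R] R) ≃ₗ[R] S)
    (hφ : ∀ (f : S →ₗ[R] R) (s : S), φ (f ∘ₗ LinearMap.mulLeft R s) = φ f * s) :
    ∃ (e : S ⊗[R] S) (ε : S →ₗ[R] R), IsFrobeniusSystem e ε := by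
  classical
  obtain ⟨n, π, σ, hπ, -, hσ⟩ := Module.Finite.exists_comp_eq_id_of_projective R S
  set x : Fin n → S := fun i => π (Pi.single (M := fun _ => R) i 1) with hx
  set f : Fin n → (S →ₗ[R] R) := fun i => LinearMap.proj i ∘ₗ σ with hf
  have hdual : ∀ m : S, ∑ i, f i m • x i = m := by
    intro m
    have h1 : σ m = ∑ i, (σ m i) • Pi.single (M := fun _ => R) i 1 := by
      simp [← Pi.single_smul, Finset.univ_sum_single]
    have h2 := congrArg π h1
    have h3 : π (σ m) = m := by
      have := congrArg (fun (g : S →ₗ[R] S) => g m) hσ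
      simpa using this
    rw [h3, map_sum] at h2
    simp only [map_smul] at h2
    simp only [hf, hx, LinearMap.comp_apply, LinearMap.proj_apply]
    exact h2.symm
  have hrepr : ∀ g : S →ₗ[R] R, (∑ i, g (x i) • f i) = g := by
    intro g
    ext m
    rw [LinearMap.sum_apply]
    simp only [LinearMap.smul_apply, smul_eq_mul]
    calc ∑ i, g (x i) * f i m = ∑ i, g (f i m • x i) := by
            simp [map_smul, mul_comm]
      _ = g m := by rw [← map_sum, hdual]
  -- φ applied to the coordinate expansion of any functional
  have hrep : ∀ g : S →ₗ[R] R, ∑ i, g (x i) • φ (f i) = φ g := by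
    intro g
    conv_rhs => rw [← hrepr g]
    rw [map_sum]
    simp_rw [map_smul]
  set ε : S →ₗ[R] R := φ.symm 1 with hε
  have hφε : φ ε = 1 := φ.apply_symm_apply 1
  refine ⟨∑ i, x i ⊗ₜ[R] φ (f i), ε, ?_, ?_, ?_⟩
  · intro s
    rw [map_sum, map_sum]
    simp only [LinearMap.rTensor_tmul, LinearMap.lTensor_tmul,
      LinearMap.mulLeft_apply, LinearMap.mulRight_apply]
    calc ∑ i, (s * x i) ⊗ₜ[R] φ (f i)
        = ∑ i, (∑ j, f j (s * x i) • x j) ⊗ₜ[R] φ (f i) := by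
          simp_rw [hdual]
      _ = ∑ i, ∑ j, x j ⊗ₜ[R] (f j (s * x i) • φ (f i)) := by
          simp_rw [sum_tmul, smul_tmul]
      _ = ∑ j, x j ⊗ₜ[R] (∑ i, ((f j) ∘ₗ LinearMap.mulLeft R s) (x i) • φ (f i)) := by
          rw [Finset.sum_comm]
          simp_rw [tmul_sum]
          rfl
      _ = ∑ j, x j ⊗ₜ[R] (φ (f j) * s) := by
          simp_rw [hrep, hφ]
  · rw [map_sum]
    have : ∀ i, ctrL ε (x i ⊗ₜ[R] φ (f i)) = ε (x i) • φ (f i) := by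
      intro i
      simp [ctrL]
    simp_rw [this, hrep, hφε]
  · rw [map_sum]
    have h1 : ∀ i, ctrR ε (x i ⊗ₜ[R] φ (f i)) = ε (φ (f i)) • x i := by
      intro i
      simp [ctrR]
    have h2 : ∀ i, ε (φ (f i)) = f i 1 := by
      intro i
      have : f i = ε ∘ₗ LinearMap.mulLeft R (φ (f i)) := by
        apply φ.injective
        rw [hφ, hφε, one_mul]
      have h3 := congrArg (fun h : S →ₗ[R] R => h (1:S)) this
      simpa using h3.symm
    simp_rw [h1, h2, hdual]
end

section
/- Let i : R → S be a ring homomorphism admitting a Frobenius system (e, ε), i.e., e = e¹ ⊗ e² ∈ (S ⊗_R S)^S and an R-bimodule map ε : S → R with ε(e¹)e² = e¹ε(e²) = 1. Then S is finitely generated projective as a right R-module and Hom_R(S, R) ≅ S as (R,S)-bimodules. -/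
/-!
STATEMENT 1. If `S/R` admits a Frobenius system `(e, ε)`, then `S` is finitely
generated projective as a (right) `R`-module and `Hom_R(S,R) ≅ S` as
`(R,S)`-bimodules. (`R` commutative acting centrally, i.e. `Algebra R S`.)
-/

open TensorProduct

section Aux

variable {R S : Type*} [CommRing R] [Ring S] [Algebra R S]

@[simp] lemma ctrL_tmul (f : S →ₗ[R] R) (x y : S) : ctrL f (x ⊗ₜ[R] y) = f x • y := by
  simp [ctrL]

@[simp] lemma ctrR_tmul (f : S →ₗ[R] R) (x y : S) : ctrR f (x ⊗ₜ[R] y) = f y • x := by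
  simp [ctrR]

lemma ctrL_lTensor (f : S →ₗ[R] R) (s : S) :
    ctrL f ∘ₗ LinearMap.lTensor S (LinearMap.mulRight R s)
      = LinearMap.mulRight R s ∘ₗ ctrL f := by
  ext x y
  simp [smul_mul_assoc]

lemma ctrR_rTensor (f : S →ₗ[R] R) (s : S) :
    ctrR f ∘ₗ LinearMap.rTensor S (LinearMap.mulLeft R s)
      = LinearMap.mulLeft R s ∘ₗ ctrR f := by
  ext x y
  simp [mul_smul_comm]

lemma ctrL_comp_mulLeft (f : S →ₗ[R] R) (s : S) :
    ctrL (f ∘ₗ LinearMap.mulLeft R s) = ctrL f ∘ₗ LinearMap.rTensor S (LinearMap.mulLeft R s) := by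
  ext x y
  simp

lemma eps_ctrL_eq (f ε : S →ₗ[R] R) :
    ε ∘ₗ ctrL f = f ∘ₗ ctrR ε := by
  ext x y
  simp [mul_comm]

end Aux

/-- If `S/R` admits a Frobenius system, then `S` is finitely generated projective
as a (right) `R`-module, and `Hom_R(S,R) ≅ S` as `(R,S)`-bimodules, the right
`S`-action on `Hom_R(S,R)` being `(f·s)(x) = f(s·x)`. -/
theorem finite_projective_and_hom_iso_of_frobenius_system
    {R S : Type*} [CommRing R] [Ring S] [Algebra R S]
    (e : S ⊗[R] S) (ε : S →ₗ[R] R) (h : IsFrobeniusSystem e ε) :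
    Module.Finite R S ∧ Module.Projective R S ∧
      ∃ φ : (S →ₗ[R] R) ≃ₗ[R] S,
        ∀ (f : S →ₗ[R] R) (s : S), φ (f ∘ₗ LinearMap.mulLeft R s) = φ f * s := by
  obtain ⟨hcomm, hL, hR⟩ := h
  -- key identity: every `x` is recovered from `e` and `ε`
  have key : ∀ x : S, ctrR ε (LinearMap.lTensor S (LinearMap.mulRight R x) e) = x := by
    intro x
    rw [← hcomm x, ← LinearMap.comp_apply, ctrR_rTensor, LinearMap.comp_apply, hR]
    simp [LinearMap.mulLeft_apply]
  -- finite decomposition of `e`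
  obtain ⟨t, ht⟩ := TensorProduct.exists_finset e
  have keyfin : ∀ x : S, ∑ p ∈ t, ε (p.2 * x) • p.1 = x := by
    intro x
    have := key x
    rw [ht, map_sum, map_sum] at this
    simpa using this
  -- the splitting maps
  let β : ({p // p ∈ t} → R) →ₗ[R] S :=
    { toFun := fun c => ∑ p ∈ t.attach, c p • (p : S × S).1
      map_add' := fun c d => by simp [add_smul, Finset.sum_add_distrib]
      map_smul' := fun r c => by simp [Finset.smul_sum, mul_smul] }
  let α : S →ₗ[R] ({p // p ∈ t} → R) :=
    LinearMap.pi fun p => ε ∘ₗ LinearMap.mulLeft R (p : S × S).2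
  have hsplit : β ∘ₗ α = LinearMap.id := by
    ext x
    have : ∑ p ∈ t.attach, ε ((p : S × S).2 * x) • (p : S × S).1 = x := by
      rw [Finset.sum_attach t (fun p => ε (p.2 * x) • p.1)]
      exact keyfin x
    simpa [β, α] using this
  have hsurj : Function.Surjective β := by
    intro x
    exact ⟨α x, by rw [← LinearMap.comp_apply, hsplit]; rfl⟩
  refine ⟨Module.Finite.of_surjective β hsurj, Module.Projective.of_split α β hsplit, ?_⟩
  -- the bimodule isomorphism
  refine ⟨{ toFun := fun f => ctrL f e
            map_add' := fun f g => by
              simp [ctrL, LinearMap.rTensor, map_add, TensorProduct.map_add_left]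
            map_smul' := fun r f => by
              simp [ctrL, LinearMap.rTensor, TensorProduct.map_smul_left]
            invFun := fun s => ε ∘ₗ LinearMap.mulLeft R s
            left_inv := ?_
            right_inv := ?_ }, ?_⟩
  · intro f
    ext x
    have h1 : ctrL f e * x = ctrL f (LinearMap.lTensor S (LinearMap.mulRight R x) e) := by
      rw [← LinearMap.comp_apply, ctrL_lTensor]
      rfl
    have h2 : ε (ctrL f (LinearMap.lTensor S (LinearMap.mulRight R x) e)) = f x := by
      rw [← LinearMap.comp_apply, eps_ctrL_eq, LinearMap.comp_apply, key]
    simp only [LinearMap.comp_apply, LinearMap.mulLeft_apply, h1, h2]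
  · intro s
    show ctrL (ε ∘ₗ LinearMap.mulLeft R s) e = s
    rw [ctrL_comp_mulLeft, LinearMap.comp_apply, hcomm s, ← LinearMap.comp_apply,
      ctrL_lTensor, LinearMap.comp_apply, hL]
    simp
  · intro f s
    simp only [LinearEquiv.coe_mk, Equiv.coe_fn_mk]
    show ctrL (f ∘ₗ LinearMap.mulLeft R s) e = ctrL f e * s
    rw [ctrL_comp_mulLeft, LinearMap.comp_apply, hcomm s, ← LinearMap.comp_apply,
      ctrL_lTensor, LinearMap.comp_apply]
    rfl
end

section
/- Let i : R → S be a ring homomorphism. If the induction functor F = (−) ⊗_R S : Mod-R → Mod-S and the restriction functor G : Mod-S → Mod-R form a Frobenius pair (i.e., G is simultaneously left and right adjoint to F), then S/R is a Frobenius extension: there exist e ∈ (S ⊗_R S)^S and an R-bimodule map ε : S → R with ε(e¹)e² = e¹ε(e²) = 1. -/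
/-!
STATEMENT 8. If induction `F = (−) ⊗_R S : Mod-R → Mod-S` and restriction
`G : Mod-S → Mod-R` form a Frobenius pair (`G` is both left and right adjoint
of `F`), then `S/R` is a Frobenius extension: there is a Frobenius system
`(e, ε)`. (`R` commutative acting centrally; induction realized as
`M ↦ S ⊗[R] M`.)
-/

open TensorProduct CategoryTheory

/-- The induction (extension-of-scalars) functor `Mod-R ⥤ Mod-S`,
`M ↦ S ⊗[R] M`. -/
noncomputable def inductionFunctor (R S : Type u) [CommRing R] [Ring S]
    [Algebra R S] : ModuleCat.{u} R ⥤ ModuleCat.{u} S where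
  obj M := ModuleCat.of S (S ⊗[R] M)
  map f := ModuleCat.ofHom (LinearMap.baseChange S f.hom)
  map_id _ := ModuleCat.hom_ext LinearMap.baseChange_id
  map_comp f g := ModuleCat.hom_ext (LinearMap.baseChange_comp (A := S) f.hom g.hom)

set_option maxHeartbeats 1000000 in
set_option synthInstance.maxHeartbeats 200000 in
/-- If restriction is both a left and a right adjoint of induction (a Frobenius
pair), then `S/R` admits a Frobenius system, i.e. is a Frobenius extension. -/
theorem frobenius_extension_of_frobenius_pair
    (R S : Type u) [CommRing R] [Ring S] [Algebra R S]
    (h₁ : Nonempty (inductionFunctor R S ⊣ ModuleCat.restrictScalars (algebraMap R S)))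
    (h₂ : Nonempty (ModuleCat.restrictScalars (algebraMap R S) ⊣ inductionFunctor R S)) :
    ∃ (e : S ⊗[R] S) (ε : S →ₗ[R] R), IsFrobeniusSystem e ε := by
  obtain ⟨adj⟩ := h₂
  set A := ModuleCat.restrictScalars (algebraMap R S) with hA
  set F := inductionFunctor R S with hF
  set NS := ModuleCat.of S S with hNS
  set MR := ModuleCat.of R R with hMR
  let η := adj.unit
  let c := adj.counit
  -- identity-like equivalence between the restricted S and S
  let φ : ↥(A.obj NS) ≃ₗ[R] S :=
    { AddEquiv.refl S with
      map_smul' := fun r x => show _ = _ from (Algebra.smul_def (A := S) r x).symm }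
  let Φ : (S ⊗[R] ↥(A.obj NS)) ≃ₗ[R] (S ⊗[R] S) :=
    TensorProduct.congr (LinearEquiv.refl R S) φ
  let e' : S ⊗[R] ↥(A.obj NS) := η.app NS (1 : S)
  let e : S ⊗[R] S := Φ e'
  let εc : ↥(A.obj (F.obj MR)) →ₗ[R] R := (c.app MR).hom
  -- the Frobenius functional
  let ε : S →ₗ[R] R :=
    { toFun := fun s => εc (s ⊗ₜ[R] (1 : R))
      map_add' := fun a b => by
        show εc ((a + b) ⊗ₜ[R] (1:R)) = εc (a ⊗ₜ[R] (1:R)) + εc (b ⊗ₜ[R] (1:R))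
        rw [show ((a + b) ⊗ₜ[R] (1:R) : S ⊗[R] R)
          = a ⊗ₜ 1 + b ⊗ₜ 1 from add_tmul a b 1]
        exact εc.map_add _ _
      map_smul' := fun r s => by
        have h : ((r • s) ⊗ₜ[R] (1:R) : S ⊗[R] R)
            = (algebraMap R S r) • (s ⊗ₜ[R] (1:R)) := by
          rw [TensorProduct.smul_tmul', Algebra.smul_def]
          rfl
        show εc ((r • s) ⊗ₜ[R] (1:R)) = r • εc (s ⊗ₜ[R] (1:R))
        rw [h]
        exact εc.map_smul r (s ⊗ₜ[R] (1:R)) }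
  -- commutation of Φ with the S-action on the first factor
  have hPhi_smul : ∀ (s : S) (t : S ⊗[R] ↥(A.obj NS)),
      Φ (s • t) = LinearMap.rTensor S (LinearMap.mulLeft R s) (Φ t) := by
    intro s t
    induction t using TensorProduct.induction_on with
    | zero => simp only [smul_zero, map_zero]
    | tmul x y =>
        rw [TensorProduct.smul_tmul']
        show ((s • x) ⊗ₜ[R] (φ y) : S ⊗[R] S)
          = LinearMap.rTensor S (LinearMap.mulLeft R s) (x ⊗ₜ[R] (φ y))
        rw [LinearMap.rTensor_tmul]
        rfl
    | add a b ha hb => simp only [smul_add, map_add, ha, hb]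
  -- right multiplication as an S-linear endomorphism of S
  let ρ : S → (NS ⟶ NS) := fun s => ModuleCat.ofHom
    ({ toFun := fun x => x * s
       map_add' := fun a b => add_mul a b s
       map_smul' := fun t x => mul_assoc t x s } : S →ₗ[S] S)
  have hPhi_rho : ∀ (s : S) (t : S ⊗[R] ↥(A.obj NS)),
      Φ ((A ⋙ F).map (ρ s) t) = LinearMap.lTensor S (LinearMap.mulRight R s) (Φ t) := by
    intro s t
    induction t using TensorProduct.induction_on with
    | zero => exact (congrArg Φ (map_zero ((A ⋙ F).map (ρ s)).hom)).trans (map_zero Φ)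
    | tmul x y =>
        show Φ (LinearMap.baseChange S (A.map (ρ s)).hom (x ⊗ₜ y))
          = LinearMap.lTensor S (LinearMap.mulRight R s) (Φ (x ⊗ₜ y))
        rw [LinearMap.baseChange_tmul]
        rw [show (Φ (x ⊗ₜ ((A.map (ρ s)) y)) : S ⊗[R] S) = x ⊗ₜ[R] (φ ((A.map (ρ s)) y))
          from TensorProduct.congr_tmul _ _ _ _,
          show (Φ (x ⊗ₜ y) : S ⊗[R] S) = x ⊗ₜ[R] (φ y) from TensorProduct.congr_tmul _ _ _ _,
          LinearMap.lTensor_tmul]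
        rfl
    | add a b ha hb =>
        show Φ (LinearMap.baseChange S (A.map (ρ s)).hom (a + b)) = _
        simp only [map_add]
        exact congrArg₂ (· + ·) ha hb
  have h1 : ∀ s : S, η.app NS s = s • e' := by
    intro s
    have h := (η.app NS).hom.map_smul s (1 : S)
    simp only [smul_eq_mul, mul_one] at h
    exact h
  have hnat1 : ∀ s : S, η.app NS ((1 : S) * s) = (A ⋙ F).map (ρ s) e' := by
    intro s
    have h := η.naturality (ρ s)
    exact LinearMap.congr_fun (congrArg ModuleCat.Hom.hom h) (1 : S)
  -- the counit formula on `A.obj NS`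
  have hcX : ∀ (x : S) (y : ↥(A.obj NS)),
      c.app (A.obj NS) (x ⊗ₜ y) = (εc (x ⊗ₜ[R] (1 : R))) • y := by
    intro x y
    let μ : MR ⟶ A.obj NS := @ModuleCat.ofHom R _ R (A.obj NS) _ _ _ (A.obj NS).isModule (@LinearMap.toSpanSingleton R (A.obj NS) _ _ (A.obj NS).isModule y)
    have h := c.naturality μ
    have h2 : c.app (A.obj NS) ((F ⋙ A).map μ (x ⊗ₜ[R] (1 : R)))
        = μ (εc (x ⊗ₜ[R] (1 : R))) :=
      LinearMap.congr_fun (congrArg ModuleCat.Hom.hom h) (x ⊗ₜ[R] (1 : R))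
    have e1 : ((F ⋙ A).map μ) (x ⊗ₜ[R] (1 : R)) = (x ⊗ₜ y : S ⊗[R] ↥(A.obj NS)) := by
      show LinearMap.baseChange S μ.hom
        (x ⊗ₜ[R] (1 : R)) = x ⊗ₜ y
      rw [LinearMap.baseChange_tmul]
      exact congrArg (x ⊗ₜ[R] ·) (one_smul R y)
    rw [e1] at h2
    rw [h2]
    exact @LinearMap.toSpanSingleton_apply R (A.obj NS) _ _ (A.obj NS).isModule y _
  have hctrL : ∀ t : S ⊗[R] ↥(A.obj NS), ctrL ε (Φ t) = c.app (A.obj NS) t := by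
    intro t
    induction t using TensorProduct.induction_on with
    | zero => simp only [map_zero]; exact (map_zero (c.app (A.obj NS)).hom).symm
    | tmul x y =>
        rw [hcX x y,
          show (Φ (x ⊗ₜ y) : S ⊗[R] S) = x ⊗ₜ[R] (φ y) from TensorProduct.congr_tmul _ _ _ _]
        show (TensorProduct.lid R S) (LinearMap.rTensor S ε (x ⊗ₜ[R] (φ y))) = _
        rw [LinearMap.rTensor_tmul, TensorProduct.lid_tmul, Algebra.smul_def]
        rfl
    | add a b ha hb => simp only [map_add, ha, hb]; exact (map_add (c.app (A.obj NS)).hom a b).symm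
  have lt1 : c.app (A.obj NS) e' = (1 : S) := by
    have h := adj.left_triangle_components NS
    exact LinearMap.congr_fun (congrArg ModuleCat.Hom.hom h) (1 : S)
  -- the embedding S → S ⊗[R] R as an S-linear map
  let j : NS ⟶ F.obj MR := ModuleCat.ofHom
    ({ toFun := fun s => s ⊗ₜ[R] (1 : R)
       map_add' := fun a b => add_tmul a b (1 : R)
       map_smul' := fun t x => (TensorProduct.smul_tmul' t x (1 : R)).symm } : S →ₗ[S] (S ⊗[R] R))
  have hlt : ∀ t : S ⊗[R] ↥(A.obj NS),
      (F.map (c.app MR)) ((A ⋙ F).map j t) = LinearMap.lTensor S ε (Φ t) := by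
    intro t
    induction t using TensorProduct.induction_on with
    | zero =>
        show LinearMap.baseChange S εc (LinearMap.baseChange S (A.map j).hom 0) = _
        simp only [map_zero]
    | tmul x y =>
        show LinearMap.baseChange S εc (LinearMap.baseChange S (A.map j).hom (x ⊗ₜ y))
          = LinearMap.lTensor S ε (Φ (x ⊗ₜ y))
        rw [LinearMap.baseChange_tmul, LinearMap.baseChange_tmul,
          show (Φ (x ⊗ₜ y) : S ⊗[R] S) = x ⊗ₜ[R] (φ y) from TensorProduct.congr_tmul _ _ _ _,
          LinearMap.lTensor_tmul]
        rfl
    | add a b ha hb =>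
        show LinearMap.baseChange S εc (LinearMap.baseChange S (A.map j).hom (a + b)) = _
        simp only [map_add]
        exact congrArg₂ (· + ·) ha hb
  have rt1 : F.map (c.app MR) (η.app (F.obj MR) ((1 : S) ⊗ₜ[R] (1 : R)))
      = (1 : S) ⊗ₜ[R] (1 : R) := by
    have h := adj.right_triangle_components MR
    exact LinearMap.congr_fun (congrArg ModuleCat.Hom.hom h) ((1 : S) ⊗ₜ[R] (1 : R))
  have natj1 : η.app (F.obj MR) ((1 : S) ⊗ₜ[R] (1 : R)) = (A ⋙ F).map j e' := by
    have h := η.naturality j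
    exact LinearMap.congr_fun (congrArg ModuleCat.Hom.hom h) (1 : S)
  have key3 : LinearMap.lTensor S ε e = (1 : S) ⊗ₜ[R] (1 : R) := by
    rw [← hlt e', ← natj1, rt1]
  refine ⟨e, ε, ?_, ?_, ?_⟩
  · intro s
    have h := hnat1 s
    rw [one_mul, h1 s] at h
    calc LinearMap.rTensor S (LinearMap.mulLeft R s) e
        = Φ (s • e') := (hPhi_smul s e').symm
      _ = Φ ((A ⋙ F).map (ρ s) e') := by rw [h]
      _ = LinearMap.lTensor S (LinearMap.mulRight R s) e := hPhi_rho s e'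
  · rw [show ctrL ε e = c.app (A.obj NS) e' from hctrL e', lt1]
  · show (TensorProduct.rid R S) (LinearMap.lTensor S ε e) = 1
    rw [key3, TensorProduct.rid_tmul, one_smul]
end
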